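/- Let F be a subfield of ℝ, let q ∈ F be nonzero with q ≠ 1 and q ≠ −1, and let a, b, c ∈ F satisfy b² − 4·a·c·q < 0 (as real numbers). Then the quadratic form f = a·x² + b·x·y + c·y² is not a prime element of the quantum plane O_q(F²). -/

import Mathlib

noncomputable section

/-- The defining relation of the quantum plane: `y * x = q • (x * y)`. -/
inductive QRel (F : Type) [Field F] (q : F) :
    FreeAlgebra F (Fin 2) → FreeAlgebra F (Fin 2) → Prop
  | rel : QRel F q (FreeAlgebra.ι F 1 * FreeAlgebra.ι F 0)
      (q • (FreeAlgebra.ι F 0 * FreeAlgebra.ι F 1))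

/-- The quantum plane `O_q(F²)`. -/
abbrev QPlane (F : Type) [Field F] (q : F) : Type := RingQuot (QRel F q)

/-- The generator `x` of the quantum plane. -/
def Qx (F : Type) [Field F] (q : F) : QPlane F q :=
  RingQuot.mkAlgHom F (QRel F q) (FreeAlgebra.ι F 0)

/-- The generator `y` of the quantum plane. -/
def Qy (F : Type) [Field F] (q : F) : QPlane F q :=
  RingQuot.mkAlgHom F (QRel F q) (FreeAlgebra.ι F 1)

/-- `r` divides `s` if `s = r·t` or `s = t·r` for some `t`. -/
def EltDvd {R : Type} [Ring R] (r s : R) : Prop :=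
  ∃ t : R, s = r * t ∨ s = t * r

/-- `r` is prime if `r ∣ s·t` implies `r ∣ s` or `r ∣ t`. -/
def IsPrimeElt {R : Type} [Ring R] (r : R) : Prop :=
  ∀ s t : R, EltDvd r (s * t) → EltDvd r s ∨ EltDvd r t

open Polynomial

section Aux

variable {F : Type} [Field F] {q : F}

/-- Lift of a quantum-plane presentation to any algebra with elements satisfying the relation. -/
def qLift {A : Type} [Semiring A] [Algebra F A] (u v : A)
    (h : v * u = q • (u * v)) : QPlane F q →ₐ[F] A :=
  RingQuot.liftAlgHom F ⟨FreeAlgebra.lift F ![u, v], by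
    rintro _ _ ⟨⟩
    simp [h]⟩

theorem qLift_x {A : Type} [Semiring A] [Algebra F A] (u v : A)
    (h : v * u = q • (u * v)) : qLift u v h (Qx F q) = u := by
  unfold qLift Qx
  rw [RingQuot.liftAlgHom_mkAlgHom_apply, FreeAlgebra.lift_ι_apply]
  simp

theorem qLift_y {A : Type} [Semiring A] [Algebra F A] (u v : A)
    (h : v * u = q • (u * v)) : qLift u v h (Qy F q) = v := by
  unfold qLift Qy
  rw [RingQuot.liftAlgHom_mkAlgHom_apply, FreeAlgebra.lift_ι_apply]
  simp

end Aux

set_option maxHeartbeats 1600000 in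
set_option synthInstance.maxHeartbeats 400000 in
theorem stmt_14 (F : Subfield ℝ) (q a b c : F) (hq : q ≠ 0)
    (hq1 : q ≠ 1) (hqm1 : q ≠ -1)
    (hdisc : (b : ℝ) ^ 2 - 4 * (a : ℝ) * (c : ℝ) * (q : ℝ) < 0) :
    ¬ IsPrimeElt
        (a • (Qx F q ^ 2) + b • (Qx F q * Qy F q) + c • (Qy F q ^ 2)) := by
  intro hP
  have ha : a ≠ 0 := by
    intro h
    rw [h] at hdisc
    push_cast at hdisc
    nlinarith [sq_nonneg (b : ℝ)]
  have hc : c ≠ 0 := by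
    intro h
    rw [h] at hdisc
    push_cast at hdisc
    nlinarith [sq_nonneg (b : ℝ)]
  have hqq : q * q ≠ 1 := by
    intro h
    rcases mul_self_eq_one_iff.mp h with h1 | h1
    · exact hq1 h1
    · exact hqm1 h1
  set x := Qx F q with hx
  set y := Qy F q with hy
  set f := a • (x ^ 2) + b • (x * y) + c • (y ^ 2) with hf
  set g := a • (x ^ 2) + (q * b) • (x * y) + (q * (q * c)) • (y ^ 2) with hg
  have rel : y * x = q • (x * y) := by
    have h0 := RingQuot.mkAlgHom_rel F (QRel.rel (F := F) (q := q))
    rw [map_mul, map_smul, map_mul] at h0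
    exact h0
  -- the key commutation identity
  have h1 : (x * y) * x = q • (x * (x * y)) := by
    rw [mul_assoc, rel, mul_smul_comm, ← mul_assoc]
  have h2 : (y ^ 2) * x = (q * q) • (x * y ^ 2) := by
    rw [sq, mul_assoc, rel, mul_smul_comm, ← mul_assoc, rel, smul_mul_assoc,
      smul_smul, mul_assoc]
  have key : f * x = x * g := by
    rw [hf, hg]
    simp only [add_mul, mul_add, smul_mul_assoc, mul_smul_comm]
    rw [h1, h2]
    have hx3 : x ^ 2 * x = x * x ^ 2 := by
      rw [← pow_succ, ← pow_succ']
    rw [hx3]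
    module
  have hdvd : EltDvd f (x * g) := ⟨x, Or.inl key.symm⟩
  -- the two evaluation homomorphisms
  have hrel1 : (0 : Polynomial F) * X = q • (X * 0) := by simp
  have hrel2 : (X : Polynomial F) * 0 = q • (0 * X) := by simp
  set φ : QPlane F q →ₐ[F] Polynomial F := qLift X 0 hrel1 with hφ
  set ψ : QPlane F q →ₐ[F] Polynomial F := qLift 0 X hrel2 with hψ
  have hφx : φ x = X := qLift_x _ _ _
  have hφy : φ y = 0 := qLift_y _ _ _
  have hψx : ψ x = 0 := qLift_x _ _ _
  have hψy : ψ y = X := qLift_y _ _ _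
  have hφf : φ f = a • X ^ 2 := by
    simp [hf, map_add, map_smul, map_mul, map_pow, hφx, hφy]
  have hφg : φ g = a • X ^ 2 := by
    simp [hg, map_add, map_smul, map_mul, map_pow, hφx, hφy]
  have hψf : ψ f = c • X ^ 2 := by
    simp [hf, map_add, map_smul, map_mul, map_pow, hψx, hψy]
  have hψg : ψ g = (q * (q * c)) • X ^ 2 := by
    simp [hg, map_add, map_smul, map_mul, map_pow, hψx, hψy]
  have hX2 : (a • X ^ 2 : Polynomial F) ≠ 0 :=
    smul_ne_zero ha (pow_ne_zero _ X_ne_zero)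
  have hcX2 : (c • X ^ 2 : Polynomial F) ≠ 0 :=
    smul_ne_zero hc (pow_ne_zero _ X_ne_zero)
  rcases hP x g hdvd with h | h
  · -- f divides x : impossible (degree)
    obtain ⟨t, ht | ht⟩ := h
    · have := congrArg φ ht
      rw [map_mul, hφf, hφx] at this
      have hdvd2 : (X : Polynomial F) ^ 2 ∣ X := by
        rw [smul_eq_C_mul] at this
        exact ⟨C a * φ t, by linear_combination this⟩
      rw [X_pow_dvd_iff] at hdvd2
      have := hdvd2 1 (by norm_num)
      simp at this
    · have := congrArg φ ht
      rw [map_mul, hφf, hφx] at this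
      have hdvd2 : (X : Polynomial F) ^ 2 ∣ X := by
        rw [smul_eq_C_mul] at this
        exact ⟨φ t * C a, by linear_combination this⟩
      rw [X_pow_dvd_iff] at hdvd2
      have := hdvd2 1 (by norm_num)
      simp at this
  · -- f divides g : forces q² = 1
    obtain ⟨t, ht⟩ := h
    have hφt : φ t = 1 := by
      rcases ht with ht | ht <;>
      · have := congrArg φ ht
        rw [map_mul, hφf, hφg] at this
        apply mul_left_cancel₀ hX2
        simp only [smul_eq_C_mul, map_mul] at this ⊢
        first
          | linear_combination this
          | linear_combination -this
    have hψt : ψ t = C (q * q) := by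
      rcases ht with ht | ht <;>
      · have := congrArg ψ ht
        rw [map_mul, hψf, hψg] at this
        apply mul_left_cancel₀ hcX2
        simp only [smul_eq_C_mul, map_mul] at this ⊢
        first
          | linear_combination this
          | linear_combination -this
    -- compare the two evaluations at 0
    have hcomp : (aeval (0 : F)).comp φ = (aeval (0 : F)).comp ψ := by
      apply RingQuot.ringQuot_ext'
      apply FreeAlgebra.hom_ext
      funext i
      fin_cases i <;>
        simp [AlgHom.comp_apply, hφ, hψ, qLift, RingQuot.liftAlgHom_mkAlgHom_apply]
    have hev := DFunLike.congr_fun hcomp t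
    simp only [AlgHom.comp_apply, hφt, hψt, map_one, aeval_C] at hev
    exact hqq (by exact_mod_cast hev.symm)
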